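/- If r is an odd positive integer, then r^3 divides \sum_{d | r} \mu(r/d) \binom{3d-1}{d-1}. -/

import Mathlib

open Finset ArithmeticFunction

/-- Expansion of ∏ (j + x) to second order, with the key identity for the x² coefficient. -/
lemma my_expand (s : Finset ℕ) (x : ℤ) :
    ∃ A2 E : ℤ, ∏ j ∈ s, ((j : ℤ) + x)
      = ∏ j ∈ s, (j : ℤ) + (∑ j ∈ s, ∏ i ∈ s.erase j, (i : ℤ)) * x + A2 * x ^ 2 + E * x ^ 3
    ∧ 2 * (∏ j ∈ s, (j : ℤ)) * A2
      = (∑ j ∈ s, ∏ i ∈ s.erase j, (i : ℤ)) ^ 2 - ∑ j ∈ s, (∏ i ∈ s.erase j, (i : ℤ)) ^ 2 := by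
  classical
  induction s using Finset.induction_on with
  | empty => exact ⟨0, 0, by simp⟩
  | @insert a s ha ih =>
    obtain ⟨A2, E, h1, h2⟩ := ih
    have hA1 : (∑ j ∈ (insert a s), ∏ i ∈ (insert a s).erase j, (i : ℤ))
        = ∏ j ∈ s, (j : ℤ) + (a : ℤ) * ∑ j ∈ s, ∏ i ∈ s.erase j, (i : ℤ) := by
      rw [Finset.sum_insert ha, Finset.erase_insert ha]
      congr 1
      rw [Finset.mul_sum]
      apply Finset.sum_congr rfl
      intro j hj
      have haj : a ≠ j := fun h => ha (h ▸ hj)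
      rw [Finset.erase_insert_of_ne haj, Finset.prod_insert (fun h => ha (Finset.mem_of_mem_erase h))]
    have hT2 : (∑ j ∈ (insert a s), (∏ i ∈ (insert a s).erase j, (i : ℤ)) ^ 2)
        = (∏ j ∈ s, (j : ℤ)) ^ 2 + (a : ℤ) ^ 2 * ∑ j ∈ s, (∏ i ∈ s.erase j, (i : ℤ)) ^ 2 := by
      rw [Finset.sum_insert ha, Finset.erase_insert ha]
      congr 1
      rw [Finset.mul_sum]
      apply Finset.sum_congr rfl
      intro j hj
      have haj : a ≠ j := fun h => ha (h ▸ hj)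
      rw [Finset.erase_insert_of_ne haj, Finset.prod_insert (fun h => ha (Finset.mem_of_mem_erase h)), mul_pow]
    refine ⟨∑ j ∈ s, ∏ i ∈ s.erase j, (i : ℤ) + (a : ℤ) * A2, A2 + (a : ℤ) * E + E * x, ?_, ?_⟩
    · rw [Finset.prod_insert ha, Finset.prod_insert ha, h1, hA1]
      ring
    · rw [Finset.prod_insert ha, hA1, hT2]
      have : (2 : ℤ) * (↑a * ∏ j ∈ s, (j:ℤ)) * (∑ j ∈ s, ∏ i ∈ s.erase j, (i:ℤ) + ↑a * A2)
          = 2 * ↑a * (∏ j ∈ s, (j:ℤ)) * (∑ j ∈ s, ∏ i ∈ s.erase j, (i:ℤ))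
            + ↑a^2 * (2 * (∏ j ∈ s, (j:ℤ)) * A2) := by ring
      rw [this, h2]
      ring

def Sf (p M : ℕ) : Finset ℕ := (Finset.Ico 1 (M + 1)).filter (fun j => ¬ p ∣ j)

def Jf (p M : ℕ) : ℤ := ∏ j ∈ Sf p M, (j : ℤ)

def Pf (p M j : ℕ) : ℤ := ∏ i ∈ (Sf p M).erase j, (i : ℤ)

def A1f (p M : ℕ) : ℤ := ∑ j ∈ Sf p M, Pf p M j

def T2f (p M : ℕ) : ℤ := ∑ j ∈ Sf p M, (Pf p M j) ^ 2

def Bf (p M : ℕ) : ℤ := ∑ j ∈ Sf p M, Pf p M j * Pf p M (M - j)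

lemma mem_Sf {p M j : ℕ} : j ∈ Sf p M ↔ (1 ≤ j ∧ j ≤ M) ∧ ¬ p ∣ j := by
  simp [Sf, Nat.lt_succ_iff]

lemma mul_Pf {p M j : ℕ} (hj : j ∈ Sf p M) : (j : ℤ) * Pf p M j = Jf p M :=
  Finset.mul_prod_erase _ _ hj

lemma Sf_invol {p M j : ℕ} (hpM : p ∣ M) (hj : j ∈ Sf p M) : M - j ∈ Sf p M := by
  rw [mem_Sf] at hj ⊢
  obtain ⟨⟨h1, h2⟩, h3⟩ := hj
  have hjM : j ≠ M := by rintro rfl; exact h3 hpM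
  refine ⟨⟨by omega, by omega⟩, fun hd => h3 ?_⟩
  have : p ∣ M - (M - j) := (Nat.dvd_sub hpM hd)
  rwa [Nat.sub_sub_self h2] at this

lemma sum_Sf_reflect {p M : ℕ} (hpM : p ∣ M) (f : ℕ → ℤ) :
    ∑ j ∈ Sf p M, f (M - j) = ∑ j ∈ Sf p M, f j := by
  apply Finset.sum_nbij' (fun j => M - j) (fun j => M - j)
  · intro j hj; exact Sf_invol hpM hj
  · intro j hj; exact Sf_invol hpM hj
  · intro j hj
    rw [mem_Sf] at hj; omega
  · intro j hj
    rw [mem_Sf] at hj; omega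
  · intro j hj; rfl

/-- G1: the exact pairing identity 2·J·A1 = M·B. -/
lemma G1 {p M : ℕ} (hpM : p ∣ M) (hp : 1 < p) :
    2 * Jf p M * A1f p M = (M : ℤ) * Bf p M := by
  have key : ∀ j ∈ Sf p M, Jf p M * Pf p M j + Jf p M * Pf p M (M - j)
      = (M : ℤ) * (Pf p M j * Pf p M (M - j)) := by
    intro j hj
    have hj' : M - j ∈ Sf p M := Sf_invol hpM hj
    have e1 : (j : ℤ) * Pf p M j = Jf p M := mul_Pf hj
    have e2 : ((M - j : ℕ) : ℤ) * Pf p M (M - j) = Jf p M := mul_Pf hj'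
    have hjM : j ≤ M := (mem_Sf.mp hj).1.2
    have e3 : ((M - j : ℕ) : ℤ) = (M : ℤ) - j := by
      push_cast [Nat.cast_sub hjM]; ring
    rw [e3] at e2
    calc Jf p M * Pf p M j + Jf p M * Pf p M (M - j)
        = (((M:ℤ) - j) * Pf p M (M - j)) * Pf p M j + ((j : ℤ) * Pf p M j) * Pf p M (M - j) := by
          rw [e1, e2]
      _ = (M : ℤ) * (Pf p M j * Pf p M (M - j)) := by ring
  have h2 : 2 * Jf p M * A1f p M
      = ∑ j ∈ Sf p M, (Jf p M * Pf p M j + Jf p M * Pf p M (M - j)) := by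
    rw [Finset.sum_add_distrib]
    have hrefl := sum_Sf_reflect hpM (fun j => Jf p M * Pf p M j)
    rw [hrefl, A1f, Finset.mul_sum, ← two_mul, Finset.mul_sum]
    apply Finset.sum_congr rfl; intro j hj; ring
  rw [h2, Finset.sum_congr rfl key, Bf, Finset.mul_sum]

lemma isUnit_cast {p c j : ℕ} (hp : p.Prime) (hj : ¬ p ∣ j) :
    IsUnit (j : ZMod (p ^ c)) := by
  rw [ZMod.isUnit_iff_coprime]
  exact Nat.Coprime.pow_right c (((Nat.Prime.coprime_iff_not_dvd hp).mpr hj).symm)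

/-- G2: p^c ∣ B + T2. -/
lemma G2 {p c M : ℕ} (hp : p.Prime) (hc : 1 ≤ c) (hM : p ^ c ∣ M) :
    ((p : ℤ) ^ c) ∣ Bf p M + T2f p M := by
  have hpM : p ∣ M := dvd_trans (dvd_pow_self p (by omega)) hM
  have : (((p ^ c : ℕ) : ℤ)) ∣ Bf p M + T2f p M := by
    rw [← ZMod.intCast_zmod_eq_zero_iff_dvd]
    have hM0 : ((M : ℕ) : ZMod (p ^ c)) = 0 := by
      obtain ⟨k, rfl⟩ := hM
      rw [Nat.cast_mul, ZMod.natCast_self, zero_mul]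
    push_cast [Bf, T2f, ← Finset.sum_add_distrib]
    apply Finset.sum_eq_zero
    intro j hj
    have hj' : M - j ∈ Sf p M := Sf_invol hpM hj
    have hjle : j ≤ M := (mem_Sf.mp hj).1.2
    have hpj : ¬ p ∣ j := (mem_Sf.mp hj).2
    have hu : IsUnit (j : ZMod (p ^ c)) := isUnit_cast hp hpj
    have h1 : (j : ZMod (p ^ c)) * ((Pf p M j : ℤ) : ZMod (p ^ c)) = ((Jf p M : ℤ) : ZMod (p ^ c)) := by
      have := mul_Pf hj
      calc (j : ZMod (p ^ c)) * ((Pf p M j : ℤ) : ZMod (p ^ c))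
          = (((j : ℤ) * Pf p M j : ℤ) : ZMod (p ^ c)) := by push_cast; ring
        _ = _ := by rw [this]
    have h2 : (((M - j : ℕ) : ℤ) : ZMod (p ^ c)) * ((Pf p M (M - j) : ℤ) : ZMod (p ^ c))
        = ((Jf p M : ℤ) : ZMod (p ^ c)) := by
      have := mul_Pf hj'
      calc (((M - j : ℕ) : ℤ) : ZMod (p ^ c)) * ((Pf p M (M - j) : ℤ) : ZMod (p ^ c))
          = ((((M - j : ℕ) : ℤ) * Pf p M (M - j) : ℤ) : ZMod (p ^ c)) := by push_cast; ring
        _ = _ := by rw [this]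
    have h3 : (((M - j : ℕ) : ℤ) : ZMod (p ^ c)) = - (j : ZMod (p ^ c)) := by
      have : ((M - j : ℕ) : ℤ) = (M : ℤ) - j := by
        have := Nat.cast_sub (R := ℤ) hjle; omega
      rw [this]
      push_cast
      rw [show ((M : ℕ) : ZMod (p ^ c)) = 0 from hM0]
      ring
    have h2' : (j : ZMod (p ^ c)) * ((Pf p M (M - j) : ℤ) : ZMod (p ^ c))
        = - ((Jf p M : ℤ) : ZMod (p ^ c)) := by
      rw [h3] at h2
      linear_combination -h2
    have key : ((j : ZMod (p ^ c))) ^ 2 *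
        (((Pf p M j : ℤ) : ZMod (p ^ c)) * ((Pf p M (M - j) : ℤ) : ZMod (p ^ c))
          + ((Pf p M j : ℤ) : ZMod (p ^ c)) ^ 2) = 0 := by
      calc ((j : ZMod (p ^ c))) ^ 2 * (((Pf p M j : ℤ) : ZMod (p ^ c)) * ((Pf p M (M - j) : ℤ) : ZMod (p ^ c)) + ((Pf p M j : ℤ) : ZMod (p ^ c)) ^ 2)
          = ((j : ZMod (p ^ c)) * ((Pf p M j : ℤ) : ZMod (p ^ c))) * ((j : ZMod (p ^ c)) * ((Pf p M (M - j) : ℤ) : ZMod (p ^ c)))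
            + ((j : ZMod (p ^ c)) * ((Pf p M j : ℤ) : ZMod (p ^ c))) ^ 2 := by ring
        _ = ((Jf p M : ℤ) : ZMod (p ^ c)) * (- ((Jf p M : ℤ) : ZMod (p ^ c))) + ((Jf p M : ℤ) : ZMod (p ^ c)) ^ 2 := by rw [h1, h2']
        _ = 0 := by ring
    exact ((IsUnit.mul_right_eq_zero (hu.pow 2)).mp key)
  simpa using this

lemma sum_blocks {A : Type*} [AddCommMonoid A] {p q : ℕ} (hpq : p ∣ q)
    (h : ℕ → A) (hper : ∀ j, h (j + q) = h j) (K : ℕ) :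
    ∑ j ∈ Sf p (q * K), h j = K • ∑ j ∈ Sf p q, h j := by
  have hiter : ∀ j K, h (j + q * K) = h j := by
    intro j K
    induction K with
    | zero => simp
    | succ K ih => rw [Nat.mul_succ, ← Nat.add_assoc, hper, ih]
  induction K with
  | zero => simp [Sf]
  | succ K ih =>
    have e1 : q * (K + 1) + 1 = (q * K + 1) + q := by ring
    rw [Sf, Finset.sum_filter, e1,
      ← Finset.sum_Ico_consecutive (fun j => if ¬ p ∣ j then h j else 0)
        (by omega : 1 ≤ q * K + 1) (by omega : q * K + 1 ≤ (q * K + 1) + q)]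
    have step1 : ∑ j ∈ Finset.Ico 1 (q * K + 1), (if ¬ p ∣ j then h j else 0)
        = K • ∑ j ∈ Sf p q, h j := by
      rw [← Finset.sum_filter]; exact ih
    have step2 : ∑ j ∈ Finset.Ico (q * K + 1) ((q * K + 1) + q), (if ¬ p ∣ j then h j else 0)
        = ∑ j ∈ Sf p q, h j := by
      rw [Finset.sum_Ico_eq_sum_range]
      have e2 : (q * K + 1) + q - (q * K + 1) = q := by omega
      rw [e2, Sf, Finset.sum_filter, Finset.sum_Ico_eq_sum_range]
      have e3 : q + 1 - 1 = q := by omega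
      rw [e3]
      apply Finset.sum_congr rfl
      intro i _
      have hdvd : (p ∣ q * K + 1 + i) ↔ (p ∣ 1 + i) := by
        constructor
        · intro hd
          have : p ∣ q * K := Dvd.dvd.mul_right hpq K
          have := Nat.dvd_sub hd this
          simpa [show q * K + 1 + i - q * K = 1 + i by omega] using this
        · intro hd
          have : p ∣ q * K := Dvd.dvd.mul_right hpq K
          have := Nat.dvd_add this hd
          simpa [show q * K + (1 + i) = q * K + 1 + i by omega] using this
      have hh : h (q * K + 1 + i) = h (1 + i) := by
        have : q * K + 1 + i = (1 + i) + q * K := by omega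
        rw [this, hiter]
      by_cases hc : p ∣ 1 + i
      · simp [hdvd, hc]
      · simp [hdvd, hc, hh]
    rw [step1, step2, succ_nsmul]

lemma sum_Sf_units {p c : ℕ} [NeZero (p ^ c)] (hp : p.Prime) (hc : 1 ≤ c)
    (f : ZMod (p ^ c) → ZMod (p ^ c)) :
    ∑ j ∈ Sf p (p ^ c), f ((j : ℕ) : ZMod (p ^ c)) = ∑ x : (ZMod (p ^ c))ˣ, f (x : ZMod (p ^ c)) := by
  have hq1 : 1 < p ^ c := Nat.one_lt_pow (by omega) hp.one_lt
  haveI : Nontrivial (ZMod (p ^ c)) := ZMod.nontrivial_iff.mpr (by omega)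
  refine Finset.sum_bij' (fun j hj => ZMod.unitOfCoprime j
      (Nat.Coprime.pow_right c (((Nat.Prime.coprime_iff_not_dvd hp).mpr (mem_Sf.mp hj).2).symm)))
    (fun x _ => (x : ZMod (p ^ c)).val) ?_ ?_ ?_ ?_ ?_
  · intro j hj; exact Finset.mem_univ _
  · intro x _
    rw [mem_Sf]
    have hval : (x : ZMod (p ^ c)).val < p ^ c := ZMod.val_lt _
    have hne : (x : ZMod (p ^ c)).val ≠ 0 := by
      intro h
      have h0 : (x : ZMod (p ^ c)) = 0 := by rwa [ZMod.val_eq_zero] at h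
      exact (x.ne_zero) h0
    have hcop : Nat.Coprime (x : ZMod (p ^ c)).val (p ^ c) := ZMod.val_coe_unit_coprime x
    refine ⟨⟨by omega, by omega⟩, fun hd => ?_⟩
    have hpq : p ∣ p ^ c := dvd_pow_self p (by omega)
    have hg : p ∣ Nat.gcd (x : ZMod (p ^ c)).val (p ^ c) := Nat.dvd_gcd hd hpq
    rw [Nat.Coprime] at hcop
    rw [hcop] at hg
    exact Nat.Prime.one_lt hp |>.ne' (Nat.dvd_one.mp hg)
  · intro j hj
    have hlt : j < p ^ c := by
      rcases Nat.lt_or_ge j (p ^ c) with h | h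
      · exact h
      · have hje : j = p ^ c := by
          have := (mem_Sf.mp hj).1.2; omega
        exact absurd (hje ▸ dvd_pow_self p (by omega : c ≠ 0)) (mem_Sf.mp hj).2
    simp only [ZMod.coe_unitOfCoprime]
    exact ZMod.val_cast_of_lt hlt
  · intro x _
    apply Units.ext
    simp only [ZMod.coe_unitOfCoprime]
    exact ZMod.natCast_rightInverse _
  · intro j hj
    simp only [ZMod.coe_unitOfCoprime]

lemma three_mul_sum_inv_sq {p c : ℕ} [NeZero (p ^ c)] (hp : p.Prime) (hp2 : p ≠ 2) (hc : 1 ≤ c) :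
    3 * ∑ j ∈ Sf p (p ^ c), (((j : ℕ) : ZMod (p ^ c))⁻¹) ^ 2 = 0 := by
  rw [sum_Sf_units hp hc (fun z => (z⁻¹) ^ 2)]
  have hinv : ∑ x : (ZMod (p ^ c))ˣ, ((x : ZMod (p ^ c))⁻¹) ^ 2
      = ∑ x : (ZMod (p ^ c))ˣ, ((x : ZMod (p ^ c))) ^ 2 := by
    rw [← Equiv.sum_comp (Equiv.inv (ZMod (p ^ c))ˣ) (fun x : (ZMod (p ^ c))ˣ => ((x : ZMod (p ^ c))) ^ 2)]
    apply Finset.sum_congr rfl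
    intro x _
    rw [ZMod.inv_coe_unit]
    rfl
  rw [hinv]
  have hcop2 : Nat.Coprime 2 (p ^ c) := by
    apply Nat.Coprime.pow_right
    exact (Nat.Prime.coprime_iff_not_dvd Nat.prime_two).mpr
      (fun h => hp2 ((Nat.prime_dvd_prime_iff_eq Nat.prime_two hp).mp h).symm)
  set u2 : (ZMod (p ^ c))ˣ := ZMod.unitOfCoprime 2 hcop2 with hu2
  have hu2coe : ((u2 : ZMod (p ^ c))) = 2 := by
    rw [hu2, ZMod.coe_unitOfCoprime]
    push_cast
    ring
  have hdouble : ∑ x : (ZMod (p ^ c))ˣ, ((x : ZMod (p ^ c))) ^ 2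
      = ∑ x : (ZMod (p ^ c))ˣ, (((u2 * x : (ZMod (p ^ c))ˣ) : ZMod (p ^ c))) ^ 2 := by
    rw [← Equiv.sum_comp (Equiv.mulLeft u2) (fun x : (ZMod (p ^ c))ˣ => ((x : ZMod (p ^ c))) ^ 2)]
    rfl
  have h4 : ∑ x : (ZMod (p ^ c))ˣ, (((u2 * x : (ZMod (p ^ c))ˣ) : ZMod (p ^ c))) ^ 2
      = 4 * ∑ x : (ZMod (p ^ c))ˣ, ((x : ZMod (p ^ c))) ^ 2 := by
    rw [Finset.mul_sum]
    apply Finset.sum_congr rfl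
    intro x _
    rw [Units.val_mul, hu2coe]
    ring
  rw [h4] at hdouble
  linear_combination -hdouble

/-- G3 -/
lemma G3 {p c M : ℕ} (hp : p.Prime) (hp2 : p ≠ 2) (hc : 1 ≤ c) (hM : p ^ c ∣ M) :
    ((p : ℤ) ^ c) ∣ 3 * T2f p M := by
  haveI : NeZero (p ^ c) := ⟨(pow_pos hp.pos c).ne'⟩
  obtain ⟨K, rfl⟩ := hM
  suffices h : (((p ^ c : ℕ) : ℤ)) ∣ 3 * T2f p (p ^ c * K) by simpa using h
  rw [← ZMod.intCast_zmod_eq_zero_iff_dvd]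
  push_cast [T2f]
  have hPf : ∀ j ∈ Sf p (p ^ c * K), ((Pf p (p ^ c * K) j : ℤ) : ZMod (p ^ c))
      = ((j : ZMod (p ^ c))⁻¹) * ((Jf p (p ^ c * K) : ℤ) : ZMod (p ^ c)) := by
    intro j hj
    have hu : IsUnit (j : ZMod (p ^ c)) := isUnit_cast hp (mem_Sf.mp hj).2
    have h1 : (j : ZMod (p ^ c)) * ((Pf p (p ^ c * K) j : ℤ) : ZMod (p ^ c))
        = ((Jf p (p ^ c * K) : ℤ) : ZMod (p ^ c)) := by
      have h0 := mul_Pf hj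
      calc (j : ZMod (p ^ c)) * ((Pf p (p ^ c * K) j : ℤ) : ZMod (p ^ c))
          = (((j : ℤ) * Pf p (p ^ c * K) j : ℤ) : ZMod (p ^ c)) := by push_cast; ring
        _ = _ := by rw [h0]
    calc ((Pf p (p ^ c * K) j : ℤ) : ZMod (p ^ c))
        = ((j : ZMod (p ^ c))⁻¹ * (j : ZMod (p ^ c))) * ((Pf p (p ^ c * K) j : ℤ) : ZMod (p ^ c)) := by
          rw [ZMod.inv_mul_of_unit _ hu, one_mul]
      _ = ((j : ZMod (p ^ c))⁻¹) * ((j : ZMod (p ^ c)) * ((Pf p (p ^ c * K) j : ℤ) : ZMod (p ^ c))) := by ring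
      _ = _ := by rw [h1]
  rw [Finset.sum_congr rfl (fun j hj => by rw [hPf j hj])]
  have hsum : ∑ j ∈ Sf p (p ^ c * K), (((j : ZMod (p ^ c))⁻¹) * ((Jf p (p ^ c * K) : ℤ) : ZMod (p ^ c))) ^ 2
      = ((Jf p (p ^ c * K) : ℤ) : ZMod (p ^ c)) ^ 2 * ∑ j ∈ Sf p (p ^ c * K), ((j : ZMod (p ^ c))⁻¹) ^ 2 := by
    rw [Finset.mul_sum]
    apply Finset.sum_congr rfl
    intro j _
    ring
  rw [hsum]
  have hper : ∀ j : ℕ, (((j + p ^ c : ℕ) : ZMod (p ^ c))⁻¹) ^ 2 = (((j : ℕ) : ZMod (p ^ c))⁻¹) ^ 2 := by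
    intro j
    congr 2
    rw [Nat.cast_add, ZMod.natCast_self, add_zero]
  rw [sum_blocks (dvd_pow_self p (by omega : c ≠ 0)) (fun j => ((j : ZMod (p ^ c))⁻¹) ^ 2) hper K]
  rw [nsmul_eq_mul]
  have h3 := three_mul_sum_inv_sq hp hp2 hc
  calc (3 : ZMod (p ^ c)) * (((Jf p (p ^ c * K) : ℤ) : ZMod (p ^ c)) ^ 2 * ((K : ZMod (p ^ c)) * ∑ j ∈ Sf p (p ^ c), ((j : ZMod (p ^ c))⁻¹) ^ 2))
      = ((Jf p (p ^ c * K) : ℤ) : ZMod (p ^ c)) ^ 2 * (K : ZMod (p ^ c)) * (3 * ∑ j ∈ Sf p (p ^ c), (((j : ℕ) : ZMod (p ^ c))⁻¹) ^ 2) := by ring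
    _ = 0 := by rw [h3]; ring

lemma not_dvd_Jf {p M : ℕ} (hp : p.Prime) : ¬ (p : ℤ) ∣ Jf p M := by
  intro h
  have hpI : Prime (p : ℤ) := Nat.prime_iff_prime_int.mp hp
  rw [Jf, Prime.dvd_finset_prod_iff hpI] at h
  obtain ⟨j, hj, hdvd⟩ := h
  rw [Int.natCast_dvd_natCast] at hdvd
  exact (mem_Sf.mp hj).2 hdvd

/-- Main supercongruence for the products: p^(3c) ∣ ∏(j + 2M) - ∏ j. -/
lemma main_T {p c M : ℕ} (hp : p.Prime) (hp2 : p ≠ 2) (hc : 1 ≤ c) (hM : p ^ c ∣ M) :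
    ((p : ℤ) ^ (3 * c)) ∣ (∏ j ∈ Sf p M, ((j : ℤ) + 2 * M)) - Jf p M := by
  have hpI : Prime (p : ℤ) := Nat.prime_iff_prime_int.mp hp
  have hpM : p ∣ M := dvd_trans (dvd_pow_self p (by omega)) hM
  have hMc : ((p : ℤ)) ^ c ∣ (M : ℤ) := by
    have := Int.natCast_dvd_natCast.mpr hM
    push_cast at this
    exact this
  have hJ : ¬ (p : ℤ) ∣ Jf p M := not_dvd_Jf hp
  have h2J : ¬ (p : ℤ) ∣ 2 * Jf p M := by
    intro h
    rcases (Prime.dvd_mul hpI).mp h with h | h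
    · have hp2' : (p : ℕ) ∣ 2 := by
        have : ((p:ℤ)) ∣ ((2:ℕ):ℤ) := by exact_mod_cast h
        exact_mod_cast Int.natCast_dvd_natCast.mp this
      have := (Nat.prime_dvd_prime_iff_eq hp Nat.prime_two).mp hp2'
      exact hp2 this
    · exact hJ h
  obtain ⟨A2, E, hexp, hA2⟩ := my_expand (Sf p M) (2 * M)
  have hA2' : 2 * Jf p M * A2 = A1f p M ^ 2 - T2f p M := by
    unfold Jf A1f T2f Pf
    exact hA2
  have hexp' : ∏ j ∈ Sf p M, ((j : ℤ) + 2 * M)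
      = Jf p M + A1f p M * (2 * M) + A2 * (2 * M) ^ 2 + E * (2 * M) ^ 3 := by
    unfold Jf A1f Pf
    exact hexp
  have hG1 := G1 hpM hp.one_lt
  -- p^c ∣ A1
  have hA1 : ((p : ℤ)) ^ c ∣ A1f p M := by
    have h1 : ((p : ℤ)) ^ c ∣ A1f p M * (2 * Jf p M) := by
      have : A1f p M * (2 * Jf p M) = (M : ℤ) * Bf p M := by rw [← hG1]; ring
      rw [this]
      exact Dvd.dvd.mul_right hMc _
    exact (IsCoprime.pow_left ((Prime.coprime_iff_not_dvd hpI).mpr h2J)).dvd_of_dvd_mul_right h1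
  -- p^c ∣ B + 2A1^2 - 2T2
  have hB2 : ((p : ℤ)) ^ c ∣ Bf p M + 2 * (A1f p M) ^ 2 - 2 * T2f p M := by
    have e : Bf p M + 2 * (A1f p M) ^ 2 - 2 * T2f p M
        = (Bf p M + T2f p M) - (3 * T2f p M) + 2 * (A1f p M) * A1f p M := by ring
    rw [e]
    exact dvd_add (dvd_sub (G2 hp hc hM) (G3 hp hp2 hc hM)) (hA1.mul_left (2 * A1f p M))
  -- key identity
  have hkey : Jf p M ^ 2 * (2 * (M : ℤ) * A1f p M + 4 * (M : ℤ) ^ 2 * A2)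
      = (M : ℤ) ^ 2 * Jf p M * (Bf p M + 2 * (A1f p M) ^ 2 - 2 * T2f p M) := by
    have e1 : Jf p M ^ 2 * (2 * (M : ℤ) * A1f p M) = (M:ℤ) * Jf p M * (2 * Jf p M * A1f p M) := by ring
    have e2 : Jf p M ^ 2 * (4 * (M : ℤ) ^ 2 * A2) = 2 * (M:ℤ)^2 * Jf p M * (2 * Jf p M * A2) := by ring
    calc Jf p M ^ 2 * (2 * (M : ℤ) * A1f p M + 4 * (M : ℤ) ^ 2 * A2)
        = (M:ℤ) * Jf p M * (2 * Jf p M * A1f p M) + 2 * (M:ℤ)^2 * Jf p M * (2 * Jf p M * A2) := by ring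
      _ = (M:ℤ) * Jf p M * ((M:ℤ) * Bf p M) + 2 * (M:ℤ)^2 * Jf p M * ((A1f p M)^2 - T2f p M) := by rw [hG1, hA2']
      _ = (M : ℤ) ^ 2 * Jf p M * (Bf p M + 2 * (A1f p M) ^ 2 - 2 * T2f p M) := by ring
  have hdvd_rhs : ((p:ℤ)) ^ (3 * c) ∣ (M : ℤ) ^ 2 * Jf p M * (Bf p M + 2 * (A1f p M) ^ 2 - 2 * T2f p M) := by
    have : ((p:ℤ)) ^ (3 * c) = ((p:ℤ)^c)^2 * ((p:ℤ)^c) := by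
      rw [← pow_mul, ← pow_add]; congr 1; ring
    rw [this]
    exact mul_dvd_mul (Dvd.dvd.mul_right (pow_dvd_pow_of_dvd hMc 2) _) hB2
  have hmain : ((p:ℤ)) ^ (3 * c) ∣ 2 * (M : ℤ) * A1f p M + 4 * (M : ℤ) ^ 2 * A2 := by
    have h1 : ((p:ℤ)) ^ (3 * c) ∣ Jf p M ^ 2 * (2 * (M : ℤ) * A1f p M + 4 * (M : ℤ) ^ 2 * A2) := by
      rw [hkey]; exact hdvd_rhs
    have hcop : IsCoprime (((p:ℤ)) ^ (3 * c)) (Jf p M ^ 2) :=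
      IsCoprime.pow ((Prime.coprime_iff_not_dvd hpI).mpr hJ)
    exact hcop.dvd_of_dvd_mul_left h1
  -- finish
  have hE : ((p:ℤ)) ^ (3 * c) ∣ E * (2 * (M:ℤ)) ^ 3 := by
    have : (2 * (M:ℤ)) ^ 3 = 8 * (M:ℤ)^3 := by ring
    rw [this]
    have hM3 : ((p:ℤ)) ^ (3*c) ∣ (M:ℤ)^3 := by
      have := pow_dvd_pow_of_dvd hMc 3
      rwa [← pow_mul, mul_comm c 3] at this
    exact Dvd.dvd.mul_left (Dvd.dvd.mul_left hM3 8) E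
  have : (∏ j ∈ Sf p M, ((j : ℤ) + 2 * M)) - Jf p M
      = (2 * (M : ℤ) * A1f p M + 4 * (M : ℤ) ^ 2 * A2) + E * (2 * (M:ℤ)) ^ 3 := by
    rw [hexp']
    ring
  rw [this]
  exact dvd_add hmain hE

lemma prod_multiples {p N : ℕ} (hp : 0 < p) (f : ℕ → ℕ) :
    ∏ j ∈ (Finset.Ico 1 (N * p + 1)).filter (fun j => p ∣ j), f j
      = ∏ t ∈ Finset.Ico 1 (N + 1), f (p * t) := by
  refine Finset.prod_nbij' (fun j => j / p) (fun t => p * t) ?_ ?_ ?_ ?_ ?_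
  · intro j hj
    simp only [Finset.mem_filter, Finset.mem_Ico] at hj ⊢
    obtain ⟨⟨h1, h2⟩, hd⟩ := hj
    obtain ⟨t, rfl⟩ := hd
    rw [Nat.mul_div_cancel_left t hp]
    have hle : p * t ≤ p * N := by rw [mul_comm p N]; omega
    have ht := Nat.le_of_mul_le_mul_left hle hp
    have ht1 : 1 ≤ t := by
      rcases Nat.eq_zero_or_pos t with rfl | h
      · omega
      · omega
    omega
  · intro t ht
    simp only [Finset.mem_filter, Finset.mem_Ico] at ht ⊢
    refine ⟨⟨?_, ?_⟩, Dvd.intro t rfl⟩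
    · calc 1 ≤ t := ht.1
        _ ≤ p * t := Nat.le_mul_of_pos_left t hp
    · have : t ≤ N := by omega
      calc p * t ≤ p * N := Nat.mul_le_mul_left p this
        _ = N * p := by ring
        _ < N * p + 1 := by omega
  · intro j hj
    simp only [Finset.mem_filter] at hj
    exact Nat.mul_div_cancel' hj.2
  · intro t _
    exact Nat.mul_div_cancel_left t hp
  · intro j hj
    simp only [Finset.mem_filter] at hj
    rw [Nat.mul_div_cancel' hj.2]

lemma prod_shift (a N : ℕ) (f : ℕ → ℕ) :
    ∏ t ∈ Finset.Ico 1 (N + 1), f (a + t) = ∏ j ∈ Finset.Ico (a + 1) (a + N + 1), f j := by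
  rw [Finset.prod_Ico_eq_prod_range, Finset.prod_Ico_eq_prod_range]
  have e1 : N + 1 - 1 = N := by omega
  have e2 : a + N + 1 - (a + 1) = N := by omega
  rw [e1, e2]
  apply Finset.prod_congr rfl
  intro i _
  congr 1
  omega

lemma factorial_split {p N : ℕ} (hp : 0 < p) :
    (N * p).factorial = (∏ j ∈ Sf p (N * p), j) * (p ^ N * N.factorial) := by
  have h2 := Finset.prod_filter_mul_prod_filter_not (Finset.Ico 1 (N * p + 1))
    (fun j => p ∣ j) (fun j => j)
  have h3 := prod_multiples (N := N) hp (fun j => j)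
  have h4 : ∏ t ∈ Finset.Ico 1 (N + 1), p * t = p ^ N * N.factorial := by
    rw [Finset.prod_mul_distrib, Finset.prod_const, Nat.card_Ico,
      Finset.prod_Ico_id_eq_factorial]
    norm_num
  calc (N * p).factorial = ∏ j ∈ Finset.Ico 1 (N * p + 1), j :=
        (Finset.prod_Ico_id_eq_factorial (N * p)).symm
    _ = (∏ j ∈ (Finset.Ico 1 (N * p + 1)).filter (fun j => p ∣ j), j)
        * ∏ j ∈ (Finset.Ico 1 (N * p + 1)).filter (fun j => ¬ p ∣ j), j := h2.symm
    _ = (p ^ N * N.factorial) * ∏ j ∈ Sf p (N * p), j := by rw [h3, h4]; rfl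
    _ = (∏ j ∈ Sf p (N * p), j) * (p ^ N * N.factorial) := mul_comm _ _

lemma shifted_split {p N : ℕ} (hp : 0 < p) :
    ∏ j ∈ Finset.Ico 1 (N * p + 1), (2 * (N * p) + j)
      = (∏ j ∈ Sf p (N * p), (2 * (N * p) + j))
        * (p ^ N * ∏ t ∈ Finset.Ico 1 (N + 1), (2 * N + t)) := by
  have h2 := Finset.prod_filter_mul_prod_filter_not (Finset.Ico 1 (N * p + 1))
    (fun j => p ∣ j) (fun j => 2 * (N * p) + j)
  have h3 := prod_multiples (N := N) hp (fun j => 2 * (N * p) + j)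
  have h4 : ∏ t ∈ Finset.Ico 1 (N + 1), (2 * (N * p) + p * t)
      = p ^ N * ∏ t ∈ Finset.Ico 1 (N + 1), (2 * N + t) := by
    have he : ∀ t ∈ Finset.Ico 1 (N+1), 2 * (N * p) + p * t = p * (2 * N + t) := by
      intro t _; ring
    rw [Finset.prod_congr rfl he, Finset.prod_mul_distrib, Finset.prod_const, Nat.card_Ico]
    norm_num
  calc ∏ j ∈ Finset.Ico 1 (N * p + 1), (2 * (N * p) + j)
      = (∏ j ∈ (Finset.Ico 1 (N * p + 1)).filter (fun j => p ∣ j), (2 * (N * p) + j))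
        * ∏ j ∈ (Finset.Ico 1 (N * p + 1)).filter (fun j => ¬ p ∣ j), (2 * (N * p) + j) := h2.symm
    _ = (p ^ N * ∏ t ∈ Finset.Ico 1 (N + 1), (2 * N + t))
        * ∏ j ∈ Sf p (N * p), (2 * (N * p) + j) := by rw [h3, h4]; rfl
    _ = _ := mul_comm _ _

lemma tail_factorial (N : ℕ) :
    (3 * N).factorial = (2 * N).factorial * ∏ t ∈ Finset.Ico 1 (N + 1), (2 * N + t) := by
  rw [← Finset.prod_Ico_id_eq_factorial (3 * N), ← Finset.prod_Ico_id_eq_factorial (2 * N),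
    prod_shift (2 * N) N (fun j => j)]
  rw [show 2 * N + N + 1 = 3 * N + 1 by omega]
  exact (Finset.prod_Ico_consecutive (fun j => j)
    (by omega : 1 ≤ 2 * N + 1) (by omega : 2 * N + 1 ≤ 3 * N + 1)).symm

lemma choose_prod_identity {p N : ℕ} (hp : 0 < p) :
    Nat.choose (3 * (N * p)) (N * p) * (∏ j ∈ Sf p (N * p), j)
      = Nat.choose (3 * N) N * (∏ j ∈ Sf p (N * p), (2 * (N * p) + j)) := by
  set M := N * p with hM
  set Jn := ∏ j ∈ Sf p M, j with hJn
  set J'n := ∏ j ∈ Sf p M, (2 * M + j) with hJ'n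
  set Q := ∏ t ∈ Finset.Ico 1 (N + 1), (2 * N + t) with hQ
  have hc : ∀ (L : ℕ), Nat.choose (3 * L) L * L.factorial * (2 * L).factorial
      = (3 * L).factorial := by
    intro L
    have h := Nat.choose_mul_factorial_mul_factorial (by omega : L ≤ 3 * L)
    rwa [show 3 * L - L = 2 * L by omega] at h
  have hQ2 : Nat.choose (3 * N) N * N.factorial = Q := by
    apply Nat.eq_of_mul_eq_mul_right (Nat.factorial_pos (2 * N))
    rw [hc N, tail_factorial N]
    ring
  have key : Nat.choose (3 * M) M * Jn * (p ^ N * N.factorial * (2 * M).factorial)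
      = Nat.choose (3 * N) N * J'n * (p ^ N * N.factorial * (2 * M).factorial) := by
    have lhs : Nat.choose (3 * M) M * Jn * (p ^ N * N.factorial * (2 * M).factorial)
        = (3 * M).factorial := by
      calc Nat.choose (3 * M) M * Jn * (p ^ N * N.factorial * (2 * M).factorial)
          = Nat.choose (3 * M) M * (Jn * (p ^ N * N.factorial)) * (2 * M).factorial := by ring
        _ = Nat.choose (3 * M) M * M.factorial * (2 * M).factorial := by
            rw [hM, ← factorial_split hp]
        _ = (3 * M).factorial := hc M
    have rhs : Nat.choose (3 * N) N * J'n * (p ^ N * N.factorial * (2 * M).factorial)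
        = (3 * M).factorial := by
      calc Nat.choose (3 * N) N * J'n * (p ^ N * N.factorial * (2 * M).factorial)
          = J'n * p ^ N * (Nat.choose (3 * N) N * N.factorial) * (2 * M).factorial := by ring
        _ = J'n * p ^ N * Q * (2 * M).factorial := by rw [hQ2]
        _ = (2 * M).factorial * (J'n * (p ^ N * Q)) := by ring
        _ = (2 * M).factorial * ∏ j ∈ Finset.Ico 1 (M + 1), (2 * M + j) := by
            rw [hM, ← shifted_split hp]
        _ = (3 * M).factorial := (tail_factorial M).symm
    rw [lhs, rhs]
  have hpos : 0 < p ^ N * N.factorial * (2 * M).factorial :=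
    Nat.mul_pos (Nat.mul_pos (pow_pos hp N) (Nat.factorial_pos N)) (Nat.factorial_pos (2 * M))
  exact Nat.eq_of_mul_eq_mul_right hpos key

lemma choose_three_eq {L : ℕ} (hL : 1 ≤ L) :
    Nat.choose (3 * L) L = 3 * Nat.choose (3 * L - 1) (L - 1) := by
  have h := Nat.add_one_mul_choose_eq (3 * L - 1) (L - 1)
  rw [show 3 * L - 1 + 1 = 3 * L by omega, show L - 1 + 1 = L by omega] at h
  have h2 : 3 * Nat.choose (3 * L - 1) (L - 1) * L = Nat.choose (3 * L) L * L := by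
    rw [← h]; ring
  exact (Nat.eq_of_mul_eq_mul_right (by omega) h2).symm

/-- CORE supercongruence. -/
lemma core {p c N : ℕ} (hp : p.Prime) (hp2 : p ≠ 2) (hc : 1 ≤ c) (hN : 1 ≤ N)
    (hM : p ^ c ∣ N * p) :
    ((p : ℤ)) ^ (3 * c) ∣
      (Nat.choose (3 * (N * p) - 1) (N * p - 1) : ℤ) - (Nat.choose (3 * N - 1) (N - 1) : ℤ) := by
  set M := N * p with hMdef
  have hM1 : 1 ≤ M := Nat.one_le_iff_ne_zero.mpr (Nat.mul_ne_zero (by omega) hp.pos.ne')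
  set aM : ℤ := (Nat.choose (3 * M - 1) (M - 1) : ℤ) with haM
  set aN : ℤ := (Nat.choose (3 * N - 1) (N - 1) : ℤ) with haN
  set J'f : ℤ := ∏ j ∈ Sf p M, ((j : ℤ) + 2 * M) with hJ'f
  -- cast the ℕ identity
  have hid : (Nat.choose (3 * M) M : ℤ) * Jf p M = (Nat.choose (3 * N) N : ℤ) * J'f := by
    have h := choose_prod_identity (p := p) (N := N) hp.pos
    have hcast : ((∏ j ∈ Sf p M, (2 * M + j) : ℕ) : ℤ) = J'f := by
      push_cast
      apply Finset.prod_congr rfl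
      intro j _
      ring
    have hcast2 : ((∏ j ∈ Sf p M, j : ℕ) : ℤ) = Jf p M := by push_cast; rfl
    calc (Nat.choose (3 * M) M : ℤ) * Jf p M
        = ((Nat.choose (3 * M) M * (∏ j ∈ Sf p M, j) : ℕ) : ℤ) := by push_cast [hcast2]; ring
      _ = ((Nat.choose (3 * N) N * (∏ j ∈ Sf p M, (2 * M + j)) : ℕ) : ℤ) := by rw [hMdef, h]
      _ = (Nat.choose (3 * N) N : ℤ) * J'f := by push_cast [hcast]; ring
  rw [show (Nat.choose (3 * M) M : ℤ) = 3 * aM by rw [haM, choose_three_eq hM1]; push_cast; ring,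
    show (Nat.choose (3 * N) N : ℤ) = 3 * aN by rw [haN, choose_three_eq hN]; push_cast; ring] at hid
  have hid2 : aM * Jf p M = aN * J'f := by
    have h3 : (3 : ℤ) * (aM * Jf p M) = 3 * (aN * J'f) := by
      calc (3 : ℤ) * (aM * Jf p M) = 3 * aM * Jf p M := by ring
        _ = 3 * aN * J'f := hid
        _ = 3 * (aN * J'f) := by ring
    exact mul_left_cancel₀ (by norm_num) h3
  have hdiff : (aM - aN) * Jf p M = aN * (J'f - Jf p M) := by
    rw [sub_mul, hid2]; ring
  have hdvd : ((p : ℤ)) ^ (3 * c) ∣ (aM - aN) * Jf p M := by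
    rw [hdiff]
    exact Dvd.dvd.mul_left (main_T hp hp2 hc hM) aN
  have hpI : Prime (p : ℤ) := Nat.prime_iff_prime_int.mp hp
  have hcop : IsCoprime (((p : ℤ)) ^ (3 * c)) (Jf p M) :=
    IsCoprime.pow_left ((Prime.coprime_iff_not_dvd hpI).mpr (not_dvd_Jf hp))
  exact hcop.dvd_of_dvd_mul_right hdvd

lemma sum_divisors_pp_mul {p a m : ℕ} (hp : p.Prime) (hm : 0 < m) (hpm : ¬ p ∣ m) (F : ℕ → ℤ) :
    ∑ d ∈ (p ^ a * m).divisors, F d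
      = ∑ j ∈ Finset.range (a + 1), ∑ e ∈ m.divisors, F (p ^ j * e) := by
  have hpa : p ^ a ≠ 0 := (pow_pos hp.pos a).ne'
  have hn0 : p ^ a * m ≠ 0 := by positivity
  rw [← Finset.sum_product']
  refine (Finset.sum_nbij' (fun x => p ^ x.1 * x.2)
    (fun d => (d.factorization p, d / p ^ d.factorization p)) ?_ ?_ ?_ ?_ ?_).symm
  · rintro ⟨j, e⟩ hx
    simp only [Finset.mem_product, Finset.mem_range, Nat.mem_divisors] at hx ⊢
    exact ⟨mul_dvd_mul (pow_dvd_pow p (by omega)) hx.2.1, hn0⟩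
  · intro d hd
    simp only [Nat.mem_divisors] at hd
    obtain ⟨hdvd, _⟩ := hd
    have hd0 : d ≠ 0 := by
      rintro rfl
      exact hn0 (Nat.eq_zero_of_zero_dvd hdvd)
    simp only [Finset.mem_product, Finset.mem_range, Nat.mem_divisors]
    constructor
    · have hle := (Nat.factorization_le_iff_dvd hd0 hn0).mpr hdvd
      have := hle p
      rw [Nat.factorization_mul hpa hm.ne', Finsupp.add_apply, hp.factorization_pow,
        Finsupp.single_eq_same, Nat.factorization_eq_zero_of_not_dvd hpm, add_zero] at this
      omega
    · constructor
      · have h1 : d / p ^ d.factorization p ∣ (p ^ a * m) / p ^ (p ^ a * m).factorization p :=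
          Nat.ordCompl_dvd_ordCompl_of_dvd hdvd p
        have h2 : (p ^ a * m).factorization p = a := by
          rw [Nat.factorization_mul hpa hm.ne', Finsupp.add_apply, hp.factorization_pow,
            Finsupp.single_eq_same, Nat.factorization_eq_zero_of_not_dvd hpm, add_zero]
        rw [h2, Nat.mul_div_cancel_left m (pow_pos hp.pos a) ] at h1
        exact h1
      · exact hm.ne'
  · rintro ⟨j, e⟩ hx
    simp only [Finset.mem_product, Finset.mem_range, Nat.mem_divisors] at hx
    have he0 : e ≠ 0 := fun h => hm.ne' (Nat.eq_zero_of_zero_dvd (h ▸ hx.2.1))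
    have hpe : ¬ p ∣ e := fun h => hpm (h.trans hx.2.1)
    have hpj : (p : ℕ) ^ j ≠ 0 := (pow_pos hp.pos j).ne'
    have hfact : (p ^ j * e).factorization p = j := by
      rw [Nat.factorization_mul hpj he0, Finsupp.add_apply, hp.factorization_pow,
        Finsupp.single_eq_same, Nat.factorization_eq_zero_of_not_dvd hpe, add_zero]
    have : p ^ j * e / p ^ (p ^ j * e).factorization p = e := by
      rw [hfact, Nat.mul_div_cancel_left e (pow_pos hp.pos j)]
    ext
    · simp [hfact]
    · simp [this]
  · intro d hd
    exact Nat.ordProj_mul_ordCompl_eq_self d p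
  · rintro ⟨j, e⟩ _
    rfl

lemma prime_pow_dvd_S {r : ℕ} (hr : 0 < r) (hodd : Odd r) {p : ℕ} (hp : p.Prime) (hpr : p ∣ r) :
    ((p : ℤ)) ^ (3 * r.factorization p) ∣
      ∑ d ∈ r.divisors, moebius (r / d) * (Nat.choose (3 * d - 1) (d - 1) : ℤ) := by
  have hp2 : p ≠ 2 := by
    rintro rfl
    rw [Nat.odd_iff] at hodd
    omega
  set a := r.factorization p with ha
  have ha1 : 1 ≤ a := (Nat.Prime.factorization_pos_of_dvd hp hr.ne' hpr)
  set m := r / p ^ a with hm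
  have hrm : p ^ a * m = r := Nat.ordProj_mul_ordCompl_eq_self r p
  have hm0 : 0 < m := Nat.ordCompl_pos p hr.ne'
  have hpm : ¬ p ∣ m := Nat.not_dvd_ordCompl hp hr.ne'
  have hsum := sum_divisors_pp_mul (a := a) hp hm0 hpm
    (fun d => moebius ((p ^ a * m) / d) * (Nat.choose (3 * d - 1) (d - 1) : ℤ))
  rw [← hrm, hsum]
  -- compute the inner terms
  have hdiv : ∀ j ∈ Finset.range (a + 1), ∀ e ∈ m.divisors,
      (p ^ a * m) / (p ^ j * e) = p ^ (a - j) * (m / e) := by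
    intro j hj e he
    rw [Finset.mem_range] at hj
    rw [Nat.mem_divisors] at he
    have hja : j ≤ a := by omega
    rw [← Nat.div_mul_div_comm (pow_dvd_pow p hja) he.1, Nat.pow_div hja hp.pos]
  have hmu : ∀ j ∈ Finset.range (a + 1), ∀ e ∈ m.divisors,
      moebius ((p ^ a * m) / (p ^ j * e)) = moebius (p ^ (a - j)) * moebius (m / e) := by
    intro j hj e he
    rw [hdiv j hj e he]
    rw [Nat.mem_divisors] at he
    apply isMultiplicative_moebius.map_mul_of_coprime
    apply Nat.Coprime.pow_left
    exact (Nat.Prime.coprime_iff_not_dvd hp).mpr (fun hd => hpm (hd.trans (Nat.div_dvd_of_dvd he.1)))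
  -- the j-indexed outer function
  set G : ℕ → ℤ := fun j => ∑ e ∈ m.divisors,
    (moebius (p ^ (a - j)) * moebius (m / e)) * (Nat.choose (3 * (p ^ j * e) - 1) (p ^ j * e - 1) : ℤ) with hG
  have hsum2 : ∑ j ∈ Finset.range (a + 1), ∑ e ∈ m.divisors,
      (moebius ((p ^ a * m) / (p ^ j * e)) : ℤ) * (Nat.choose (3 * (p ^ j * e) - 1) (p ^ j * e - 1) : ℤ)
      = ∑ j ∈ Finset.range (a + 1), G j := by
    apply Finset.sum_congr rfl
    intro j hj
    apply Finset.sum_congr rfl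
    intro e he
    rw [hmu j hj e he]
  rw [hsum2]
  -- split the range
  have hsplit : ∑ j ∈ Finset.range (a + 1), G j
      = (∑ j ∈ Finset.range (a - 1), G j) + G (a - 1) + G a := by
    rw [show a + 1 = (a - 1) + 1 + 1 by omega, Finset.sum_range_succ, Finset.sum_range_succ]
    congr 2
    omega
  rw [hsplit]
  have hzero : ∑ j ∈ Finset.range (a - 1), G j = 0 := by
    apply Finset.sum_eq_zero
    intro j hj
    rw [Finset.mem_range] at hj
    have h2 : a - j ≠ 0 := by omega
    have h21 : a - j ≠ 1 := by omega
    rw [hG]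
    apply Finset.sum_eq_zero
    intro e _
    rw [moebius_apply_prime_pow hp h2, if_neg h21]
    push_cast
    ring
  rw [hzero, zero_add]
  have hGa1 : G (a - 1) = ∑ e ∈ m.divisors,
      - (moebius (m / e) : ℤ) * (Nat.choose (3 * (p ^ (a - 1) * e) - 1) (p ^ (a - 1) * e - 1) : ℤ) := by
    rw [hG]
    apply Finset.sum_congr rfl
    intro e _
    rw [show a - (a - 1) = 1 by omega, moebius_apply_prime_pow hp one_ne_zero, if_pos rfl]
    push_cast
    ring
  have hGa : G a = ∑ e ∈ m.divisors,
      (moebius (m / e) : ℤ) * (Nat.choose (3 * (p ^ a * e) - 1) (p ^ a * e - 1) : ℤ) := by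
    rw [hG]
    apply Finset.sum_congr rfl
    intro e _
    rw [Nat.sub_self, pow_zero, moebius_apply_one]
    push_cast
    ring
  rw [hGa1, hGa, ← Finset.sum_add_distrib]
  apply Finset.dvd_sum
  intro e he
  rw [Nat.mem_divisors] at he
  have he0 : 0 < e := Nat.pos_of_ne_zero (fun h => hm0.ne' (Nat.eq_zero_of_zero_dvd (h ▸ he.1)))
  have hNe : 1 ≤ p ^ (a - 1) * e := by
    have := pow_pos hp.pos (a - 1)
    exact Nat.one_le_iff_ne_zero.mpr (by positivity)
  have hae : a - 1 + 1 = a := by omega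
  have hrw : p ^ (a - 1) * e * p = p ^ a * e := by
    calc p ^ (a - 1) * e * p = p ^ (a - 1 + 1) * e := by ring
      _ = p ^ a * e := by rw [hae]
  have hMc : p ^ a ∣ (p ^ (a - 1) * e) * p := by
    rw [hrw]
    exact Dvd.dvd.mul_right dvd_rfl e
  have hcore := core hp hp2 ha1 hNe hMc
  rw [hrw] at hcore
  have : - (moebius (m / e) : ℤ) * (Nat.choose (3 * (p ^ (a - 1) * e) - 1) (p ^ (a - 1) * e - 1) : ℤ)
      + (moebius (m / e) : ℤ) * (Nat.choose (3 * (p ^ a * e) - 1) (p ^ a * e - 1) : ℤ)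
      = (moebius (m / e) : ℤ) * ((Nat.choose (3 * (p ^ a * e) - 1) (p ^ a * e - 1) : ℤ)
          - (Nat.choose (3 * (p ^ (a - 1) * e) - 1) (p ^ (a - 1) * e - 1) : ℤ)) := by ring
  rw [this]
  exact Dvd.dvd.mul_left hcore _

open ArithmeticFunction in
theorem stmt_2 (r : ℕ) (hr : 0 < r) (hodd : Odd r) :
    ((r : ℤ))^3 ∣ ∑ d ∈ r.divisors, moebius (r / d) * (Nat.choose (3*d - 1) (d - 1) : ℤ) := by
  set S : ℤ := ∑ d ∈ r.divisors, moebius (r / d) * (Nat.choose (3*d - 1) (d - 1) : ℤ) with hS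
  rcases eq_or_ne S 0 with h0 | h0
  · rw [h0]; exact dvd_zero _
  have habs : ((r ^ 3 : ℕ) : ℤ) ∣ S → ((r : ℤ))^3 ∣ S := by
    intro h; push_cast at h; exact h
  apply habs
  rw [Int.natCast_dvd]
  have hSabs : S.natAbs ≠ 0 := Int.natAbs_ne_zero.mpr h0
  rw [← Nat.factorization_le_iff_dvd (pow_ne_zero 3 hr.ne') hSabs]
  intro q
  rw [Nat.factorization_pow, Finsupp.smul_apply, smul_eq_mul]
  by_cases hq : q.Prime
  · by_cases hqr : q ∣ r
    · have hdvd := prime_pow_dvd_S hr hodd hq hqr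
      have : q ^ (3 * r.factorization q) ∣ S.natAbs := by
        rw [← Int.natCast_dvd]
        push_cast at hdvd ⊢
        exact hdvd
      exact (Nat.Prime.pow_dvd_iff_le_factorization hq hSabs).mp this
    · rw [Nat.factorization_eq_zero_of_not_dvd hqr]
      simp
  · rw [Nat.factorization_eq_zero_of_not_prime r hq]
    simp
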